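/- arXiv:2301.00471 — 2 statements merged into one kernel-verified Lean document; each statement's English description precedes it below -/
import Mathlib

section
/- Let T > 0 and k ∈ ℕ. If every f₀ ∈ H^k(𝕋)^d (real-valued) can be steered to 0 in time T by some control u ∈ L²((0,T)×𝕋;ℝ^m) vanishing a.e. outside ω, then for every n ∈ ℤ the spectral Kalman rank condition rank [B_n|M] = d holds. -/
open MeasureTheory Real Set Matrix

noncomputable section

instance : Fact (0 < 2 * Real.pi) := ⟨by positivity⟩

/-- The one-dimensional torus `ℝ/(2πℤ)`. -/
abbrev Torus : Type := AddCircle (2 * Real.pi)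

/-- The `n`-th Fourier coefficient of a vector-valued function on the torus. -/
def fCoeff {ι : Type*} (f : Torus → ι → ℂ) (n : ℤ) : ι → ℂ :=
  fun i => fourierCoeff (fun x => f x i) n

/-- The `n`-th Fourier coefficient of a real vector-valued function on the torus. -/
def fCoeffR {ι : Type*} (f : Torus → ι → ℝ) (n : ℤ) : ι → ℂ :=
  fCoeff (fun x i => (f x i : ℂ)) n

/-- Membership in the Sobolev space `H^s` (square-summability of Fourier coefficients
with weight `(1+n²)^s`). -/
def memHs {ι : Type*} [Fintype ι] (s : ℝ) (f : Torus → ι → ℝ) : Prop :=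
  Summable fun n : ℤ => (1 + (n : ℝ) ^ 2) ^ s * ∑ i, ‖fCoeffR f n i‖ ^ 2

/-- The matrix `B_n := -n² B - i n A - K`. -/
def BnMat {ι : Type*} [Fintype ι] [DecidableEq ι] (B A K : Matrix ι ι ℝ) (n : ℤ) :
    Matrix ι ι ℂ :=
  (-(n : ℂ) ^ 2) • B.map Complex.ofReal - (Complex.I * (n : ℂ)) • A.map Complex.ofReal
    - K.map Complex.ofReal

/-- The `k`-block Kalman matrix `(M, BM, …, B^{k-1}M)`. -/
def kalman {ι : Type*} [Fintype ι] [DecidableEq ι] {m : ℕ} (B : Matrix ι ι ℂ)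
    (M : Matrix ι (Fin m) ℂ) (k : ℕ) : Matrix ι (Fin k × Fin m) ℂ :=
  Matrix.of fun i p => (B ^ (p.1 : ℕ) * M) i p.2

/-- `ℓ(ω)`: supremum of the lengths of the connected components of the complement of `ω`. -/
def ellOmega (ω : Set Torus) : ℝ :=
  sSup {L : ℝ | ∃ x ∈ ωᶜ, L = (volume (connectedComponentIn ωᶜ x)).toReal}

/-- `μ* := min { |μ| : μ ∈ Sp(A') }`. -/
def muStar {dh : ℕ} (A' : Matrix (Fin dh) (Fin dh) ℝ) : ℝ :=
  sInf ((fun z : ℂ => ‖z‖) '' spectrum ℂ (A'.map Complex.ofReal))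

/-- `A'` is diagonalizable over `ℂ` with only real eigenvalues. -/
def IsDiagRealSpec {dh : ℕ} (A' : Matrix (Fin dh) (Fin dh) ℝ) : Prop :=
  ∃ (P : Matrix (Fin dh) (Fin dh) ℂ) (μ : Fin dh → ℝ),
    IsUnit P.det ∧ A'.map Complex.ofReal = P * Matrix.diagonal (fun i => (μ i : ℂ)) * P⁻¹

/-- The control `u ∈ L²((0,T)×𝕋; ℝ^m)`, vanishing a.e. outside `ω`, steers the initial datum
`f₀` to `0` in time `T`, expressed frequency-by-frequency through Duhamel's formula. -/
def steers {ι : Type*} [Fintype ι] [DecidableEq ι] {m : ℕ}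
    (B A K : Matrix ι ι ℝ) (M : Matrix ι (Fin m) ℝ) (ω : Set Torus) (T : ℝ)
    (f₀ : Torus → ι → ℝ) (u : ℝ → Torus → Fin m → ℝ) : Prop :=
  MemLp (fun p : ℝ × Torus => u p.1 p.2) 2 ((volume.restrict (Set.Ioo 0 T)).prod volume) ∧
  (∀ᵐ p : ℝ × Torus ∂((volume.restrict (Set.Ioo 0 T)).prod volume),
      p.2 ∉ ω → u p.1 p.2 = 0) ∧
  ∀ n : ℤ,
    (NormedSpace.exp ((T : ℂ) • BnMat B A K n)).mulVec (fCoeffR f₀ n)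
      + ∫ t in (0 : ℝ)..T,
          (NormedSpace.exp (((T - t : ℝ) : ℂ) • BnMat B A K n)).mulVec
            ((M.map Complex.ofReal).mulVec (fCoeffR (u t) n)) = 0


namespace Stmt1Aux

open NormedSpace AddCircle

/-! ### Linear algebra auxiliary lemmas -/

/-- `X ↦ φ ᵥ* (X * M)` as a linear map in the matrix `X`. -/
def Lmap {dd : ℕ} {J : Type*} [Fintype J] (φ : Fin dd → ℂ) (M : Matrix (Fin dd) J ℂ) :
    Matrix (Fin dd) (Fin dd) ℂ →ₗ[ℂ] (J → ℂ) where
  toFun X := Matrix.vecMul φ (X * M)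
  map_add' X Y := by
    show Matrix.vecMul φ ((X + Y) * M) = _
    rw [Matrix.add_mul, Matrix.vecMul_add]
  map_smul' c X := by
    show Matrix.vecMul φ ((c • X) * M) = _
    ext j
    simp only [Matrix.smul_mul, RingHom.id_apply, Pi.smul_apply, smul_eq_mul,
      Matrix.vecMul, dotProduct, Matrix.smul_apply, Finset.mul_sum]
    exact Finset.sum_congr rfl fun i _ => by ring

lemma ann_all {dd mm : ℕ} (B : Matrix (Fin dd) (Fin dd) ℂ) (M : Matrix (Fin dd) (Fin mm) ℂ)
    (φ : Fin dd → ℂ) (h : ∀ j < dd, Matrix.vecMul φ (B ^ j * M) = 0) (j : ℕ) :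
    Matrix.vecMul φ (B ^ j * M) = 0 := by
  induction j using Nat.strong_induction_on with
  | _ j IH =>
  by_cases hj : j < dd
  · exact h j hj
  · push_neg at hj
    have hdeg : B.charpoly.natDegree = dd := by
      rw [Matrix.charpoly_natDegree_eq_dim, Fintype.card_fin]
    have hc : B.charpoly.coeff dd = 1 := by
      have := B.charpoly_monic.coeff_natDegree
      rwa [hdeg] at this
    have h0 := B.aeval_self_charpoly
    rw [Polynomial.aeval_eq_sum_range, hdeg, Finset.sum_range_succ, hc, one_smul] at h0
    have hCH : B ^ dd = -∑ i ∈ Finset.range dd, B.charpoly.coeff i • B ^ i :=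
      eq_neg_of_add_eq_zero_right h0
    have e1 : B ^ j = -∑ i ∈ Finset.range dd, B.charpoly.coeff i • B ^ (j - dd + i) := by
      have e0 : B ^ j = B ^ (j - dd) * B ^ dd := by
        rw [← pow_add]; congr 1; omega
      rw [e0, hCH, Matrix.mul_neg, Finset.mul_sum]
      congr 1
      refine Finset.sum_congr rfl fun i _ => ?_
      rw [Matrix.mul_smul, ← pow_add]
    have : Matrix.vecMul φ (B ^ j * M) = Lmap φ M (B ^ j) := rfl
    rw [this, e1, map_neg, map_sum]
    have hz : ∀ i ∈ Finset.range dd, Lmap φ M (B.charpoly.coeff i • B ^ (j - dd + i)) = 0 := by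
      intro i hi
      rw [LinearMap.map_smul]
      have : Lmap φ M (B ^ (j - dd + i)) = Matrix.vecMul φ (B ^ (j - dd + i) * M) := rfl
      rw [this, IH _ (by simp at hi; omega), smul_zero]
    rw [Finset.sum_congr rfl hz, Finset.sum_const_zero, neg_zero]

lemma ann_exp {dd mm : ℕ} (X : Matrix (Fin dd) (Fin dd) ℂ) (M : Matrix (Fin dd) (Fin mm) ℂ)
    (φ : Fin dd → ℂ) (h : ∀ j : ℕ, Matrix.vecMul φ (X ^ j * M) = 0) :
    Matrix.vecMul φ (NormedSpace.exp X * M) = 0 := by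
  let L : Matrix (Fin dd) (Fin dd) ℂ →L[ℂ] (Fin mm → ℂ) :=
    ⟨Lmap φ M, (Lmap φ M).continuous_of_finiteDimensional⟩
  have hL : ∀ Y, L Y = Matrix.vecMul φ (Y * M) := fun _ => rfl
  have : Matrix.vecMul φ (NormedSpace.exp X * M) = L (NormedSpace.exp X) := rfl
  rw [this, NormedSpace.exp_eq_tsum (𝕂 := ℂ)]
  show L (∑' n : ℕ, ((n.factorial : ℂ))⁻¹ • X ^ n) = 0
  by_cases hs : Summable (fun n : ℕ => ((n.factorial : ℂ))⁻¹ • X ^ n)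
  · rw [L.map_tsum hs]
    have hz : ∀ n : ℕ, L (((n.factorial : ℂ))⁻¹ • X ^ n) = 0 := by
      intro n
      rw [L.map_smul, hL, h n, smul_zero]
    rw [tsum_congr hz, tsum_zero]
  · rw [tsum_eq_zero_of_not_summable hs, map_zero]

lemma vecMul_exp_ne_zero {dd : ℕ} (X : Matrix (Fin dd) (Fin dd) ℂ) (φ : Fin dd → ℂ)
    (hφ : φ ≠ 0) : Matrix.vecMul φ (NormedSpace.exp X) ≠ 0 := by
  intro h0
  have key : Matrix.vecMul (Matrix.vecMul φ (NormedSpace.exp X)) (NormedSpace.exp (-X)) = φ := by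
    rw [Matrix.vecMul_vecMul, ← Matrix.exp_add_of_commute X (-X)
      (Commute.neg_right (Commute.refl X)), add_neg_cancel, NormedSpace.exp_zero,
      Matrix.vecMul_one]
  rw [h0, Matrix.zero_vecMul] at key
  exact hφ key.symm

lemma exists_ann {dd : ℕ} {J : Type*} [Fintype J] (A : Matrix (Fin dd) J ℂ)
    (h : A.rank < dd) : ∃ φ : Fin dd → ℂ, φ ≠ 0 ∧ Matrix.vecMul φ A = 0 := by
  have h1 : Aᵀ.rank < dd := by rwa [Matrix.rank_transpose]
  have h2 := LinearMap.finrank_range_add_finrank_ker (Aᵀ.mulVecLin)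
  have h3 : Module.finrank ℂ (Fin dd → ℂ) = dd := by simp
  rw [h3] at h2
  have hker : LinearMap.ker Aᵀ.mulVecLin ≠ ⊥ := by
    intro hk
    rw [hk, finrank_bot] at h2
    have h4 : Aᵀ.rank = Module.finrank ℂ (LinearMap.range Aᵀ.mulVecLin) := rfl
    omega
  obtain ⟨φ, hφmem, hφne⟩ := Submodule.exists_mem_ne_zero_of_ne_bot hker
  refine ⟨φ, hφne, ?_⟩
  have : Aᵀ.mulVec φ = 0 := hφmem
  rwa [Matrix.mulVec_transpose] at this

/-! ### Fourier auxiliary lemmas -/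

lemma fourierCoeff_fourier (m q : ℤ) :
    fourierCoeff (⇑(@fourier (2 * Real.pi) m)) q = if q = m then 1 else 0 := by
  have h1 := fourierCoeff_toLp (T := 2 * Real.pi) (fourier m) q
  have h2 := fourierBasis_repr (T := 2 * Real.pi) (fourierLp 2 m) q
  rw [← h1, ← h2, show (fourierLp (T := 2 * Real.pi) 2 m) = fourierBasis m from
    (congrFun coe_fourierBasis m).symm, HilbertBasis.repr_self, lp.single_apply]
  split_ifs with hqm
  · subst hqm; simp
  · simp [Pi.single_apply, hqm]

lemma integrable_of_bound {g : Torus → ℂ} (hg : Continuous g) (C : ℝ)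
    (hb : ∀ x, ‖g x‖ ≤ C) :
    Integrable g (@AddCircle.haarAddCircle (2 * Real.pi) _) :=
  memLp_one_iff_integrable.mp <|
    (memLp_top_of_bound hg.aestronglyMeasurable C
      (Filter.Eventually.of_forall hb)).mono_exponent le_top

lemma fc_re_fourier (n q : ℤ) :
    fourierCoeff (fun x : Torus => (((fourier (T := 2 * Real.pi) n x).re : ℝ) : ℂ)) q
      = 2⁻¹ * ((if q = n then 1 else 0) + (if q = -n then 1 else 0)) := by
  have hfun : (fun x : Torus => (((fourier (T := 2 * Real.pi) n x).re : ℝ) : ℂ))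
      = fun x : Torus => (2⁻¹ : ℂ) * (fourier n x + fourier (-n) x) := by
    funext x
    rw [fourier_neg]
    have h := Complex.add_conj (fourier (T := 2 * Real.pi) n x)
    rw [h]
    push_cast
    ring
  rw [hfun]
  have hadd : fourierCoeff (fun x : Torus => fourier n x + fourier (-n) x) q
      = fourierCoeff (⇑(fourier (T := 2 * Real.pi) n)) q
        + fourierCoeff (⇑(fourier (T := 2 * Real.pi) (-n))) q := by
    simp_rw [fourierCoeff, smul_add]
    have hb : ∀ (a b : ℤ), Integrable
        (fun t : Torus => fourier (T := 2 * Real.pi) a t • fourier (T := 2 * Real.pi) b t)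
        (@AddCircle.haarAddCircle (2 * Real.pi) _) := by
      intro a b
      refine integrable_of_bound
        ((fourier (T := 2 * Real.pi) a).continuous.smul
          (fourier (T := 2 * Real.pi) b).continuous) 1 fun x => ?_
      have e1 : ‖fourier (T := 2 * Real.pi) a x‖ = 1 := Circle.norm_coe _
      have e2 : ‖fourier (T := 2 * Real.pi) b x‖ = 1 := Circle.norm_coe _
      rw [norm_smul, e1, e2]
      norm_num
    exact integral_add (hb _ _) (hb _ _)
  rw [fourierCoeff.const_mul, hadd, fourierCoeff_fourier, fourierCoeff_fourier]

end Stmt1Aux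

/-- If every initial datum in `H^k(𝕋)^d` can be steered to `0` in time `T`,
then the spectral Kalman rank condition `rank [B_n|M] = d` holds for every `n ∈ ℤ`. -/
theorem statement1
    (d m : ℕ) (hd : 2 ≤ d) (hm : 1 ≤ m) (hmd : m ≤ d)
    (B A K : Matrix (Fin d) (Fin d) ℝ) (M : Matrix (Fin d) (Fin m) ℝ)
    (ω : Set Torus) (hω : IsOpen ω) (hωne : ω.Nonempty)
    (T : ℝ) (hT : 0 < T) (k : ℕ)
    (hcontrol : ∀ f₀ : Torus → Fin d → ℝ, MemLp f₀ 2 volume → memHs (k : ℝ) f₀ →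
      ∃ u : ℝ → Torus → Fin m → ℝ, steers B A K M ω T f₀ u) :
    ∀ n : ℤ, (kalman (BnMat B A K n) (M.map Complex.ofReal) d).rank = d := by
  intro n
  by_contra hrank
  set Bn := BnMat B A K n with hBn
  set M' := M.map Complex.ofReal with hM'
  have hle : (kalman Bn M' d).rank ≤ d :=
    le_trans (Matrix.rank_le_card_height _) (by simp)
  have hlt : (kalman Bn M' d).rank < d := lt_of_le_of_ne hle hrank
  obtain ⟨φ, hφ, hann⟩ := Stmt1Aux.exists_ann _ hlt
  have hj : ∀ j < d, Matrix.vecMul φ (Bn ^ j * M') = 0 := by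
    intro j hjd
    funext p
    have h0 := congrFun hann (⟨j, hjd⟩, p)
    simpa [Matrix.vecMul, dotProduct, kalman] using h0
  have hall := Stmt1Aux.ann_all Bn M' φ hj
  have hsm : ∀ c : ℂ, Matrix.vecMul φ (NormedSpace.exp (c • Bn) * M') = 0 := by
    intro c
    refine Stmt1Aux.ann_exp _ _ _ fun j => ?_
    have e : Matrix.vecMul φ ((c • Bn) ^ j * M') = Stmt1Aux.Lmap φ M' ((c • Bn) ^ j) := rfl
    rw [e, smul_pow, LinearMap.map_smul]
    show c ^ j • Matrix.vecMul φ (Bn ^ j * M') = 0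
    rw [hall j, smul_zero]
  have hψ : Matrix.vecMul φ (NormedSpace.exp ((T : ℂ) • Bn)) ≠ 0 :=
    Stmt1Aux.vecMul_exp_ne_zero _ _ hφ
  obtain ⟨i, hi⟩ : ∃ i, Matrix.vecMul φ (NormedSpace.exp ((T : ℂ) • Bn)) i ≠ 0 := by
    by_contra hc; push_neg at hc; exact hψ (funext hc)
  set f₀ : Torus → Fin d → ℝ :=
    fun x j => if j = i then (fourier (T := 2 * Real.pi) n x).re else 0 with hf₀
  have hcont : Continuous f₀ := by
    refine continuous_pi fun j => ?_
    by_cases hji : j = i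
    · simp only [hf₀, hji, if_pos rfl]
      exact Complex.continuous_re.comp (fourier (T := 2 * Real.pi) n).continuous
    · simp only [hf₀, hji, if_false]
      exact continuous_const
  have hmem : MemLp f₀ 2 volume := by
    refine (memLp_top_of_bound hcont.aestronglyMeasurable 1
      (Filter.Eventually.of_forall fun x => ?_)).mono_exponent le_top
    rw [pi_norm_le_iff_of_nonneg zero_le_one]
    intro j
    by_cases hji : j = i
    · simp only [hf₀, hji, if_pos rfl]
      have h1 := Complex.abs_re_le_norm (fourier (T := 2 * Real.pi) n x)
      have h2 : ‖(fourier (T := 2 * Real.pi) n x)‖ = 1 := Circle.norm_coe _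
      rw [Real.norm_eq_abs]
      rw [h2] at h1
      exact h1
    · simp [hf₀, hji]
  have hcoeffz : ∀ (q : ℤ) (j : Fin d), j ≠ i →
      fCoeffR f₀ q j = 0 := by
    intro q j hji
    show fourierCoeff (fun x => ((f₀ x j : ℝ) : ℂ)) q = 0
    have e : (fun x : Torus => ((f₀ x j : ℝ) : ℂ)) = fun _ => 0 := by
      funext x; simp [hf₀, hji]
    rw [e]
    simp [fourierCoeff]
  have hcoeffi : ∀ (q : ℤ),
      fCoeffR f₀ q i = 2⁻¹ * ((if q = n then 1 else 0) + (if q = -n then 1 else 0)) := by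
    intro q
    show fourierCoeff (fun x => ((f₀ x i : ℝ) : ℂ)) q = _
    have e : (fun x : Torus => ((f₀ x i : ℝ) : ℂ))
        = fun x : Torus => (((fourier (T := 2 * Real.pi) n x).re : ℝ) : ℂ) := by
      funext x; simp [hf₀]
    rw [e, Stmt1Aux.fc_re_fourier]
  have hHs : memHs (k : ℝ) f₀ := by
    refine summable_of_ne_finset_zero (s := ({n, -n} : Finset ℤ)) fun q hq => ?_
    simp only [Finset.mem_insert, Finset.mem_singleton, not_or] at hq
    have hz : ∀ j, fCoeffR f₀ q j = 0 := by
      intro j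
      by_cases hji : j = i
      · subst hji
        rw [hcoeffi q, if_neg hq.1, if_neg hq.2]
        norm_num
      · exact hcoeffz q j hji
    simp [hz]
  obtain ⟨u, hu⟩ := hcontrol f₀ hmem hHs
  obtain ⟨-, -, hduh⟩ := hu
  have heq := hduh n
  set r : ℂ := 2⁻¹ * ((1 : ℂ) + (if n = -n then 1 else 0)) with hr
  have hrne : r ≠ 0 := by
    rw [hr]; split_ifs <;> norm_num
  have hc : fCoeffR f₀ n = fun j => if j = i then r else 0 := by
    funext j
    by_cases hji : j = i
    · subst hji
      rw [hcoeffi n, if_pos rfl, hr, if_pos rfl]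
    · rw [hcoeffz n j hji, if_neg hji]
  have h1 : dotProduct φ ((NormedSpace.exp ((T : ℂ) • Bn)).mulVec (fCoeffR f₀ n))
      = Matrix.vecMul φ (NormedSpace.exp ((T : ℂ) • Bn)) i * r := by
    rw [dotProduct_mulVec, hc]
    simp [dotProduct, mul_ite, mul_zero]
  let Lφ : (Fin d → ℂ) →L[ℂ] ℂ :=
    ⟨{ toFun := fun v => dotProduct φ v,
       map_add' := fun v w => dotProduct_add φ v w,
       map_smul' := fun c v => by
         simp only [RingHom.id_apply, smul_eq_mul, dotProduct, Finset.mul_sum,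
           Pi.smul_apply]
         exact Finset.sum_congr rfl fun _ _ => by ring },
     LinearMap.continuous_of_finiteDimensional _⟩
  have hFzero : ∀ t : ℝ, dotProduct φ
      ((NormedSpace.exp (((T - t : ℝ) : ℂ) • Bn)).mulVec (M'.mulVec (fCoeffR (u t) n))) = 0 := by
    intro t
    rw [dotProduct_mulVec, dotProduct_mulVec, Matrix.vecMul_vecMul,
      hsm (((T - t : ℝ) : ℂ)), zero_dotProduct]
  have h2 : dotProduct φ (∫ t in (0 : ℝ)..T,
      (NormedSpace.exp (((T - t : ℝ) : ℂ) • Bn)).mulVec (M'.mulVec (fCoeffR (u t) n))) = 0 := by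
    have hLφ : ∀ v, Lφ v = dotProduct φ v := fun _ => rfl
    rw [← hLφ]
    by_cases hint : IntervalIntegrable (fun t : ℝ =>
        (NormedSpace.exp (((T - t : ℝ) : ℂ) • Bn)).mulVec (M'.mulVec (fCoeffR (u t) n)))
        volume 0 T
    · rw [← Lφ.intervalIntegral_comp_comm hint]
      simp only [hLφ, hFzero]
      simp
    · rw [intervalIntegral.integral_undef hint, map_zero]
  have hfinal := congrArg (dotProduct φ) heq
  rw [dotProduct_add, dotProduct_zero, h1, h2, add_zero] at hfinal
  exact hi ((mul_eq_zero.mp hfinal).resolve_right hrne)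
end
end

section
/- Let B ∈ M_d(ℂ), M ∈ M_{d,m}(ℂ), ℓ ∈ ℕ, and let w : ℝ → ℂ^m be of class C^ℓ. Define Y(t) := Σ_{j=0}^{ℓ−1} B^{ℓ−1−j}·M·w^{(j)}(t) (so Y ≡ 0 when ℓ = 0). Then for every t ∈ ℝ: Y'(t) − B·Y(t) = M·w^{(ℓ)}(t) − B^ℓ·M·w(t). -/
open MeasureTheory Real Set Matrix

noncomputable section

/-- Telescoping identity: with `Y = Σ_{j<ℓ} B^{ℓ-1-j} M w^{(j)}`, one has
`Y' - BY = M w^{(ℓ)} - B^ℓ M w`. -/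
theorem statement8
    (d m ℓ : ℕ) (B : Matrix (Fin d) (Fin d) ℂ) (M : Matrix (Fin d) (Fin m) ℂ)
    (w : ℝ → Fin m → ℂ) (hw : ContDiff ℝ (ℓ : ℕ∞) w) (t : ℝ) :
    HasDerivAt
      (fun s => ∑ j ∈ Finset.range ℓ, (B ^ (ℓ - 1 - j) * M).mulVec (iteratedDeriv j w s))
      (B.mulVec (∑ j ∈ Finset.range ℓ, (B ^ (ℓ - 1 - j) * M).mulVec (iteratedDeriv j w t))
        + (M.mulVec (iteratedDeriv ℓ w t) - (B ^ ℓ * M).mulVec (w t))) t := by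
  -- derivative of each term
  have key : ∀ j ∈ Finset.range ℓ, HasDerivAt
      (fun s => (B ^ (ℓ - 1 - j) * M).mulVec (iteratedDeriv j w s))
      ((B ^ (ℓ - 1 - j) * M).mulVec (iteratedDeriv (j + 1) w t)) t := by
    intro j hj
    have hjℓ : j < ℓ := Finset.mem_range.mp hj
    have hdiff : DifferentiableAt ℝ (iteratedDeriv j w) t :=
      (hw.differentiable_iteratedDeriv j (by exact_mod_cast hjℓ)) t
    have h1 : HasDerivAt (iteratedDeriv j w) (iteratedDeriv (j + 1) w t) t := by
      rw [iteratedDeriv_succ]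
      exact hdiff.hasDerivAt
    have := ((LinearMap.toContinuousLinearMap
        (B ^ (ℓ - 1 - j) * M).mulVecLin).hasFDerivAt.restrictScalars
        ℝ).comp_hasDerivAt t h1
    have heq : (fun s => (B ^ (ℓ - 1 - j) * M) *ᵥ iteratedDeriv j w s)
        = (⇑(LinearMap.toContinuousLinearMap (B ^ (ℓ - 1 - j) * M).mulVecLin)
            ∘ iteratedDeriv j w) := by
      funext s; simp [Function.comp]
    rw [heq]
    simpa using this
  have hsum := HasDerivAt.fun_sum key
  -- algebraic identification of the derivative
  have halg : ∑ j ∈ Finset.range ℓ, (B ^ (ℓ - 1 - j) * M).mulVec (iteratedDeriv (j + 1) w t)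
      = B.mulVec (∑ j ∈ Finset.range ℓ, (B ^ (ℓ - 1 - j) * M).mulVec (iteratedDeriv j w t))
        + (M.mulVec (iteratedDeriv ℓ w t) - (B ^ ℓ * M).mulVec (w t)) := by
    set f : ℕ → Fin d → ℂ := fun j => (B ^ (ℓ - j) * M).mulVec (iteratedDeriv j w t) with hf
    have h1 : ∀ j ∈ Finset.range ℓ,
        (B ^ (ℓ - 1 - j) * M).mulVec (iteratedDeriv (j + 1) w t) = f (j + 1) := by
      intro j hj
      have : ℓ - 1 - j = ℓ - (j + 1) := by omega
      simp [hf, this]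
    have h2 : B.mulVec (∑ j ∈ Finset.range ℓ, (B ^ (ℓ - 1 - j) * M).mulVec (iteratedDeriv j w t))
        = ∑ j ∈ Finset.range ℓ, f j := by
      have hms := map_sum B.mulVecLin
        (fun j => (B ^ (ℓ - 1 - j) * M) *ᵥ iteratedDeriv j w t) (Finset.range ℓ)
      simp only [Matrix.mulVecLin_apply] at hms
      rw [hms]
      refine Finset.sum_congr rfl fun j hj => ?_
      have hjℓ : j < ℓ := Finset.mem_range.mp hj
      have hpow : B * B ^ (ℓ - 1 - j) = B ^ (ℓ - j) := by
        have : ℓ - j = (ℓ - 1 - j) + 1 := by omega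
        rw [this, pow_succ']
      rw [hf]
      rw [Matrix.mulVec_mulVec, ← Matrix.mul_assoc, hpow]
    have htel : ∑ j ∈ Finset.range ℓ, (f (j + 1) - f j) = f ℓ - f 0 :=
      Finset.sum_range_sub f ℓ
    have hfl : f ℓ = M.mulVec (iteratedDeriv ℓ w t) := by simp [hf]
    have hf0 : f 0 = (B ^ ℓ * M).mulVec (w t) := by simp [hf]
    rw [Finset.sum_congr rfl h1, h2, ← hfl, ← hf0]
    have := htel
    rw [Finset.sum_sub_distrib] at this
    linear_combination (norm := abel) this
  rw [← halg]
  exact hsum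
end
end
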